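/- Let M be an mtt that is finite copying in the parameters with copying bound c, let t ∈ T_Δ be a fixed output tree, and let run_OI be defined from M, t and c as in the context. Then for every input tree s' ∈ T_Σ, every state q of rank n, all parameter-free trees u_1,…,u_n over Δ ∪ (Q × T_Σ), and every subtree t' of t: t' ∈ ⟦⟨q,s'⟩(u_1,…,u_n)⟧_OI if and only if there exist sets B_1,…,B_n of subtrees of t with |B_i| ≤ c and B_i ⊆ ⟦u_i⟧_OI for all i, such that (q,(B_1,…,B_n),t') ∈ run_OI(s'). -/

import Mathlib

namespace MttF

/-- Finite ordered trees over a label type `α`. -/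
inductive RTree (α : Type) : Type
  | node : α → List (RTree α) → RTree α

namespace RTree

variable {α β : Type}

/-- The root label of a tree. -/
def label : RTree α → α
  | node a _ => a

/-- The list of immediate subtrees of a tree. -/
def children : RTree α → List (RTree α)
  | node _ ts => ts

/-- Relabelling of trees. -/
def map (f : α → β) : RTree α → RTree β
  | node a ts => node (f a) (ts.attach.map (fun x => map f x.1))
decreasing_by
  have := List.sizeOf_lt_of_mem x.2
  simp only [node.sizeOf_spec]
  omega

/-- A tree is well-formed with respect to a rank function if every node labeled
by a rank-`k` symbol has exactly `k` children. `T_Σ` is the set of well-formed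
trees over `Σ`. -/
inductive Wf (rk : α → ℕ) : RTree α → Prop
  | node {a : α} {ts : List (RTree α)} :
      ts.length = rk a → (∀ t ∈ ts, Wf rk t) → Wf rk (node a ts)

/-- `Subtree u t` holds iff `u` is a subtree of `t` (rooted at some node of `t`). -/
inductive Subtree : RTree α → RTree α → Prop
  | refl (t : RTree α) : Subtree t t
  | step {u c : RTree α} {a : α} {ts : List (RTree α)} :
      c ∈ ts → Subtree u c → Subtree u (node a ts)

end RTree

/-- Labels for output trees with parameters: trees over `Δ ∪ Y`. -/
inductive OLab (Δ : Type) : Type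
  | out (d : Δ)
  | param (i : ℕ)

/-- Labels for right-hand sides of mtt rules: trees over `Δ ∪ (Q × X) ∪ Y`
(the second component of a call is the index of the input variable `x`). -/
inductive RLab (Δ Q : Type) : Type
  | out (d : Δ)
  | call (q : Q) (x : ℕ)
  | param (i : ℕ)

/-- Labels for "semantic" trees over `Δ ∪ (Q × T_Σ) ∪ Y`. -/
inductive SLab (Γ Δ Q : Type) : Type
  | out (d : Δ)
  | call (q : Q) (s : RTree Γ)
  | param (i : ℕ)

/-- Trees over `Δ ∪ Y`. -/
abbrev OT (Δ : Type) := RTree (OLab Δ)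
/-- Right-hand side trees over `Δ ∪ (Q × X) ∪ Y`. -/
abbrev Rhs (Δ Q : Type) := RTree (RLab Δ Q)
/-- Trees over `Δ ∪ (Q × T_Σ) ∪ Y`. -/
abbrev ST (Γ Δ Q : Type) := RTree (SLab Γ Δ Q)

/-- First-order substitution `x_i := ss_i` on a label of a right-hand side
(indices are 0-based; for well-formed rules the index is always in range). -/
def RLab.subst {Γ Δ Q : Type} (ss : List (RTree Γ)) : RLab Δ Q → SLab Γ Δ Q
  | .out d => .out d
  | .param i => .param i
  | .call q x =>
    match ss[x]? with
    | some s => .call q s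
    | none => .param x

/-- `r[x_1/s_1, …, x_k/s_k]`. -/
def substX {Γ Δ Q : Type} (ss : List (RTree Γ)) (r : Rhs Δ Q) : ST Γ Δ Q :=
  r.map (RLab.subst ss)

/-- Second-order (parameter) substitution `t[y_1/ts_1, …, y_n/ts_n]`
(`y` indices are 0-based). -/
def substY {Δ : Type} (ts : List (OT Δ)) : OT Δ → OT Δ
  | .node (.param i) _ => ts.getD i (.node (.param i) [])
  | .node (.out d) us => .node (.out d) (us.attach.map (fun x => substY ts x.1))
decreasing_by
  have := List.sizeOf_lt_of_mem x.2
  simp only [RTree.node.sizeOf_spec]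
  omega

/-- The embedding of `T_Δ` into the trees over `Δ ∪ Y`. -/
def embed {Δ : Type} (t : RTree Δ) : OT Δ := t.map OLab.out

variable {Γ Δ Q : Type}

/-- IO (call-by-value, inside-out) semantics: `SemIO rsel u t` holds iff
`t ∈ ⟦u⟧_IO`.  The rules of the transducer are given by a selector
`rsel q σ ss`: the set of right-hand sides of the `⟨q,σ⟩`-rules that are
applicable when the children of the current input node are `ss` (for a plain
mtt this does not depend on `ss`, cf. `plainSel`). -/
inductive SemIO (rsel : Q → Γ → List (RTree Γ) → Set (Rhs Δ Q)) :
    ST Γ Δ Q → OT Δ → Prop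
  | param (i : ℕ) :
      SemIO rsel (.node (.param i) []) (.node (.param i) [])
  | out {d : Δ} {us : List (ST Γ Δ Q)} {ts : List (OT Δ)}
      (hlen : ts.length = us.length)
      (h : ∀ i : Fin us.length, SemIO rsel (us.get i) (ts.get (i.cast hlen.symm))) :
      SemIO rsel (.node (.out d) us) (.node (.out d) ts)
  | call {q : Q} {σ : Γ} {ss : List (RTree Γ)} {us : List (ST Γ Δ Q)}
      {r : Rhs Δ Q} {t₀ : OT Δ} {ts : List (OT Δ)}
      (hr : r ∈ rsel q σ ss)
      (h₀ : SemIO rsel (substX ss r) t₀)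
      (hlen : ts.length = us.length)
      (h : ∀ i : Fin us.length, SemIO rsel (us.get i) (ts.get (i.cast hlen.symm))) :
      SemIO rsel (.node (.call q (.node σ ss)) us) (substY ts t₀)

mutual
/-- OI (call-by-name, outside-in) semantics: `SemOI rsel u t` holds iff
`t ∈ ⟦u⟧_OI`. -/
inductive SemOI (rsel : Q → Γ → List (RTree Γ) → Set (Rhs Δ Q)) :
    ST Γ Δ Q → OT Δ → Prop
  | param (i : ℕ) :
      SemOI rsel (.node (.param i) []) (.node (.param i) [])
  | out {d : Δ} {us : List (ST Γ Δ Q)} {ts : List (OT Δ)}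
      (hlen : ts.length = us.length)
      (h : ∀ i : Fin us.length, SemOI rsel (us.get i) (ts.get (i.cast hlen.symm))) :
      SemOI rsel (.node (.out d) us) (.node (.out d) ts)
  | call {q : Q} {σ : Γ} {ss : List (RTree Γ)} {us : List (ST Γ Δ Q)}
      {r : Rhs Δ Q} {t₀ : OT Δ} {t : OT Δ}
      (hr : r ∈ rsel q σ ss)
      (h₀ : SemOI rsel (substX ss r) t₀)
      (hs : OISub rsel us t₀ t) :
      SemOI rsel (.node (.call q (.node σ ss)) us) t

/-- OI-substitution: `OISub rsel us t₀ t` holds iff `t ∈ (t₀ ←_OI (⟦us_1⟧_OI, …, ⟦us_n⟧_OI))`,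
i.e. `t` is obtained from `t₀` by independently replacing every occurrence of a parameter
`y_i` by some member of `⟦us_i⟧_OI`. -/
inductive OISub (rsel : Q → Γ → List (RTree Γ) → Set (Rhs Δ Q)) :
    List (ST Γ Δ Q) → OT Δ → OT Δ → Prop
  | param {us : List (ST Γ Δ Q)} {i : ℕ} {t : OT Δ}
      (h : i < us.length) (hsem : SemOI rsel (us.get ⟨i, h⟩) t) :
      OISub rsel us (.node (.param i) []) t
  | out {us : List (ST Γ Δ Q)} {d : Δ} {ts ts' : List (OT Δ)}
      (hlen : ts'.length = ts.length)
      (h : ∀ i : Fin ts.length, OISub rsel us (ts.get i) (ts'.get (i.cast hlen.symm))) :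
      OISub rsel us (.node (.out d) ts) (.node (.out d) ts')
end

/-- The rule selector of a plain mtt: the applicable rules do not depend on the
child subtrees of the current input node. -/
def plainSel (rules : Q → Γ → Set (Rhs Δ Q)) :
    Q → Γ → List (RTree Γ) → Set (Rhs Δ Q) :=
  fun q σ _ => rules q σ

/-- The translation `τ_{IO,M} ⊆ T_Σ × T_Δ` realized in IO mode. -/
def tauIO (rankΓ : Γ → ℕ) (rankΔ : Δ → ℕ)
    (rsel : Q → Γ → List (RTree Γ) → Set (Rhs Δ Q)) (q₀ : Q) :
    Set (RTree Γ × RTree Δ) :=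
  {p | p.1.Wf rankΓ ∧ p.2.Wf rankΔ ∧
       SemIO rsel (.node (.call q₀ p.1) []) (embed p.2)}

/-- The translation `τ_{OI,M} ⊆ T_Σ × T_Δ` realized in OI mode. -/
def tauOI (rankΓ : Γ → ℕ) (rankΔ : Δ → ℕ)
    (rsel : Q → Γ → List (RTree Γ) → Set (Rhs Δ Q)) (q₀ : Q) :
    Set (RTree Γ × RTree Δ) :=
  {p | p.1.Wf rankΓ ∧ p.2.Wf rankΔ ∧
       SemOI rsel (.node (.call q₀ p.1) []) (embed p.2)}

/-- Well-formedness of a right-hand side of a rule of an mtt whose current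
input symbol has rank `k` and whose current state has rank `m`: output symbols
have the correct number of children, state calls `⟨q', x_i⟩` have `rank q'`
children and `i < k`, and parameters `y_j` satisfy `j < m`. -/
inductive RhsWf (rankΔ : Δ → ℕ) (rankQ : Q → ℕ) (k m : ℕ) : Rhs Δ Q → Prop
  | out {d : Δ} {ts : List (Rhs Δ Q)}
      (hlen : ts.length = rankΔ d) (h : ∀ t ∈ ts, RhsWf rankΔ rankQ k m t) :
      RhsWf rankΔ rankQ k m (.node (.out d) ts)
  | call {q : Q} {x : ℕ} {ts : List (Rhs Δ Q)}
      (hx : x < k) (hlen : ts.length = rankQ q)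
      (h : ∀ t ∈ ts, RhsWf rankΔ rankQ k m t) :
      RhsWf rankΔ rankQ k m (.node (.call q x) ts)
  | param {i : ℕ} (hi : i < m) : RhsWf rankΔ rankQ k m (.node (.param i) [])

/-- Well-formedness of a tree over `Δ ∪ (Q × T_Σ) ∪ Y`. -/
inductive STWf (rankΓ : Γ → ℕ) (rankΔ : Δ → ℕ) (rankQ : Q → ℕ) : ST Γ Δ Q → Prop
  | out {d : Δ} {ts : List (ST Γ Δ Q)}
      (hlen : ts.length = rankΔ d) (h : ∀ t ∈ ts, STWf rankΓ rankΔ rankQ t) :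
      STWf rankΓ rankΔ rankQ (.node (.out d) ts)
  | call {q : Q} {s : RTree Γ} {ts : List (ST Γ Δ Q)}
      (hs : s.Wf rankΓ) (hlen : ts.length = rankQ q)
      (h : ∀ t ∈ ts, STWf rankΓ rankΔ rankQ t) :
      STWf rankΓ rankΔ rankQ (.node (.call q s) ts)
  | param (i : ℕ) : STWf rankΓ rankΔ rankQ (.node (.param i) [])

/-- A tree over `Δ ∪ (Q × T_Σ) ∪ Y` is parameter-free if no `y_i` occurs in it. -/
inductive NoParam : ST Γ Δ Q → Prop
  | node {l : SLab Γ Δ Q} {ts : List (ST Γ Δ Q)}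
      (hl : ∀ i : ℕ, l ≠ .param i) (h : ∀ t ∈ ts, NoParam t) :
      NoParam (.node l ts)

/-- A macro tree transducer `M = (Q, Σ, Δ, q₀, R)`.  The alphabets `Γ` (input),
`Δ` (output) and the set `Q` of states are ranked; `q₀` has rank `0`; `rules q σ`
is the (finite) set `R_{q,σ}` of right-hand sides of the `⟨q,σ⟩`-rules, and every
right-hand side is a well-formed tree over `Δ ∪ (Q × X_k) ∪ Y_m`. -/
structure MTT (Γ Δ Q : Type) where
  rankΓ : Γ → ℕ
  rankΔ : Δ → ℕ
  rankQ : Q → ℕ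
  q₀ : Q
  q₀_rank : rankQ q₀ = 0
  rules : Q → Γ → Set (Rhs Δ Q)
  rules_fin : ∀ q σ, (rules q σ).Finite
  rules_wf : ∀ q σ, ∀ r ∈ rules q σ, RhsWf rankΔ rankQ (rankΓ σ) (rankQ q) r

/-- The rule selector of a plain mtt. -/
def MTT.sel (M : MTT Γ Δ Q) : Q → Γ → List (RTree Γ) → Set (Rhs Δ Q) :=
  plainSel M.rules

end MttF
namespace MttF

/-- The number of occurrences of the parameter `y_i` in a tree over `Δ ∪ Y`. -/
def countParam {Δ : Type} (i : ℕ) : OT Δ → ℕ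
  | .node (.param j) _ => if j = i then 1 else 0
  | .node (.out _) ts => (ts.attach.map (fun x => countParam i x.1)).sum
decreasing_by
  have := List.sizeOf_lt_of_mem x.2
  simp only [RTree.node.sizeOf_spec]
  omega

/-- The argument list `(y_1, …, y_m)`. -/
def paramArgs {Γ Δ Q : Type} (m : ℕ) : List (ST Γ Δ Q) :=
  (List.range m).map (fun i => .node (.param i) [])

/-- `M` is finite copying in the parameters with copying bound `c`: for every
state `q` of rank `k`, every `s ∈ T_Σ`, and every `u ∈ ⟦⟨q,s⟩(y_1,…,y_k)⟧_OI`,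
the number of occurrences of `y_i` in `u` is at most `c`. -/
def FinCopyP {Γ Δ Q : Type} (M : MTT Γ Δ Q) (c : ℕ) : Prop :=
  ∀ (q : Q) (s : RTree Γ), s.Wf M.rankΓ →
    ∀ u : OT Δ, SemOI M.sel (.node (.call q s) (paramArgs (M.rankQ q))) u →
      ∀ i < M.rankQ q, countParam i u ≤ c

/-- Triples `(q, β⃗, v') ∈ ⋃_i Q^{(i)} × P_c(V_t)^i × V_t`. -/
abbrev TripOI (Δ Q : Type) := Q × List (Set (RTree Δ)) × RTree Δ

/-- `β ∈ P_c(V_t)`: a set of at most `c` subtrees of `t`. -/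
def SmallSet {Δ : Type} (t : RTree Δ) (c : ℕ) (β : Set (RTree Δ)) : Prop :=
  (∀ w ∈ β, RTree.Subtree w t) ∧ β.ncard ≤ c

/-- The predicate `f_{β⃗,a⃗}(r, v')` of the inverse-type construction for
OI-mtts that are finite copying in the parameters. -/
inductive FPredOI {Δ Q : Type} (t : RTree Δ) (βs : List (Set (RTree Δ)))
    (aenv : List (Set (TripOI Δ Q))) : Rhs Δ Q → RTree Δ → Prop
  | param {i : ℕ} {v : RTree Δ} {β : Set (RTree Δ)}
      (h : βs[i]? = some β) (hv : v ∈ β) :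
      FPredOI t βs aenv (.node (.param i) []) v
  | out {d : Δ} {rs : List (Rhs Δ Q)} {ws : List (RTree Δ)}
      (hlen : ws.length = rs.length)
      (h : ∀ i : Fin rs.length, FPredOI t βs aenv (rs.get i) (ws.get (i.cast hlen.symm))) :
      FPredOI t βs aenv (.node (.out d) rs) (.node d ws)
  | call {q' : Q} {x : ℕ} {rs : List (Rhs Δ Q)} {v : RTree Δ}
      (γs : List (Set (RTree Δ)))
      (hlen : γs.length = rs.length)
      (ha : (q', γs, v) ∈ aenv.getD x ∅)
      (h : ∀ i : Fin rs.length, ∀ u ∈ γs.get (i.cast hlen.symm),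
            FPredOI t βs aenv (rs.get i) u) :
      FPredOI t βs aenv (.node (.call q' x) rs) v

/-- The run `run_OI(s)` of the inverse-type automaton of an OI-mtt that is
finite copying in the parameters with bound `c`, for the fixed output tree `t`:
`run_OI(σ(s_1,…,s_k)) = {(q, β⃗, v') | ∃ r ∈ R_{q,σ}: f_{β⃗,(run_OI(s_1),…,run_OI(s_k))}(r, v')}`. -/
def runOI {Γ Δ Q : Type} (rankQ : Q → ℕ)
    (rsel : Q → Γ → List (RTree Γ) → Set (Rhs Δ Q)) (t : RTree Δ) (c : ℕ) :
    RTree Γ → Set (TripOI Δ Q)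
  | .node σ ss =>
      {trip | trip.2.1.length = rankQ trip.1 ∧
        (∀ β ∈ trip.2.1, SmallSet t c β) ∧ RTree.Subtree trip.2.2 t ∧
        ∃ r ∈ rsel trip.1 σ ss,
          FPredOI t trip.2.1 (ss.attach.map (fun x => runOI rankQ rsel t c x.1)) r trip.2.2}
decreasing_by
  have := List.sizeOf_lt_of_mem x.2
  simp only [RTree.node.sizeOf_spec]
  omega

end MttF

namespace MttF
namespace RTree

variable {α β : Type}

theorem ind {P : RTree α → Prop}
    (h : ∀ (a : α) (ts : List (RTree α)), (∀ u ∈ ts, P u) → P (node a ts)) :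
    ∀ t, P t
  | node a ts => h a ts (fun u hu => have := List.sizeOf_lt_of_mem hu; ind h u)
decreasing_by simp only [node.sizeOf_spec]; omega

@[simp] theorem map_node (f : α → β) (a : α) (ts : List (RTree α)) :
    map f (node a ts) = node (f a) (ts.map (map f)) := by
  rw [map, List.attach_map_val]

@[simp] theorem label_node (a : α) (ts : List (RTree α)) : label (node a ts) = a := rfl
@[simp] theorem children_node (a : α) (ts : List (RTree α)) : children (node a ts) = ts := rfl

theorem node_label_children (t : RTree α) : node t.label t.children = t := by
  cases t; rfl

theorem Subtree.trans {a b c : RTree α} (h1 : Subtree a b) (h2 : Subtree b c) : Subtree a c := by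
  induction h2 with
  | refl => exact h1
  | step hm _ ih => exact Subtree.step hm ih

theorem subtree_of_mem {u : RTree α} {a : α} {ts : List (RTree α)} (h : u ∈ ts) :
    Subtree u (node a ts) := Subtree.step h (Subtree.refl u)

end RTree

variable {Γ Δ Q : Type}

@[simp] theorem embed_node (d : Δ) (ts : List (RTree Δ)) :
    embed (RTree.node d ts) = RTree.node (OLab.out d) (ts.map embed) := by
  simp [embed]

@[simp] theorem countParam_param (i j : ℕ) (ts : List (OT Δ)) :
    countParam i (RTree.node (OLab.param j) ts) = if j = i then 1 else 0 := by
  rw [countParam]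

@[simp] theorem countParam_out (i : ℕ) (d : Δ) (ts : List (OT Δ)) :
    countParam i (RTree.node (OLab.out d) ts) = (ts.map (countParam i)).sum := by
  rw [countParam, List.attach_map_val]

@[simp] theorem substX_param (ss : List (RTree Γ)) (i : ℕ) :
    substX ss (RTree.node (RLab.param i) []) = (RTree.node (SLab.param i) [] : ST Γ Δ Q) := by
  simp [substX, RLab.subst]

@[simp] theorem substX_out (ss : List (RTree Γ)) (d : Δ) (rs : List (Rhs Δ Q)) :
    substX ss (RTree.node (RLab.out d) rs) =
      RTree.node (SLab.out d) (rs.map (substX ss)) := by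
  simp [substX, RLab.subst]

theorem substX_call (ss : List (RTree Γ)) (q : Q) (x : ℕ) (rs : List (Rhs Δ Q))
    {s : RTree Γ} (hx : ss[x]? = some s) :
    substX ss (RTree.node (RLab.call q x) rs) =
      RTree.node (SLab.call q s) (rs.map (substX ss)) := by
  simp [substX, RLab.subst, hx]

@[simp] theorem sel_eq (M : MTT Γ Δ Q) (q : Q) (σ : Γ) (ss : List (RTree Γ)) :
    M.sel q σ ss = M.rules q σ := rfl
/-- All parameters occurring in an `ST` tree are `< m`. -/
inductive STParamLt (m : ℕ) : ST Γ Δ Q → Prop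
  | node {l : SLab Γ Δ Q} {ts : List (ST Γ Δ Q)}
      (hl : ∀ i : ℕ, l = .param i → i < m) (h : ∀ u ∈ ts, STParamLt m u) :
      STParamLt m (.node l ts)

/-- Well-formed `OT` trees: parameter nodes are leaves with index `< m`. -/
inductive OTOk (m : ℕ) : OT Δ → Prop
  | out {d : Δ} {ts : List (OT Δ)} (h : ∀ u ∈ ts, OTOk m u) :
      OTOk m (.node (.out d) ts)
  | param {i : ℕ} (h : i < m) : OTOk m (.node (.param i) [])

theorem substX_paramLt {rankΔ : Δ → ℕ} {rankQ : Q → ℕ} {k m : ℕ} {r : Rhs Δ Q}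
    (hr : RhsWf rankΔ rankQ k m r) (ss : List (RTree Γ)) (hk : k ≤ ss.length) :
    STParamLt m (substX ss r) := by
  induction hr with
  | out hlen h ih =>
      rw [substX_out]
      exact STParamLt.node (by intro i hi; cases hi)
        (by intro u hu; obtain ⟨v, hv, rfl⟩ := List.mem_map.1 hu; exact ih v hv)
  | @call q x ts hx hlen h ih =>
      rw [substX_call _ _ _ _ (List.getElem?_eq_getElem (by omega))]
      exact STParamLt.node (by intro i hi; cases hi)
        (by intro u hu; obtain ⟨v, hv, rfl⟩ := List.mem_map.1 hu; exact ih v hv)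
  | param hi =>
      rw [substX_param]
      exact STParamLt.node (by intro j hj; cases hj; omega) (by intro u hu; cases hu)

theorem semOI_paramLt {rsel : Q → Γ → List (RTree Γ) → Set (Rhs Δ Q)} {m : ℕ}
    {u : ST Γ Δ Q} {w : OT Δ} (h : SemOI rsel u w) (hu : STParamLt m u) :
    OTOk m w := by
  refine SemOI.rec (rsel := rsel)
    (motive_1 := fun u w _ => STParamLt m u → OTOk m w)
    (motive_2 := fun us t₀ w _ => (∀ u ∈ us, STParamLt m u) → OTOk m w)
    ?_ ?_ ?_ ?_ ?_ h hu
  · intro i hp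
    cases hp with
    | node hl h' => exact OTOk.param (hl i rfl)
  · intro d us ts hlen h' ih hp
    cases hp with
    | node hl h'' =>
      refine OTOk.out ?_
      intro w hw
      obtain ⟨i, rfl⟩ := List.mem_iff_get.1 hw
      exact ih (i.cast hlen) (h'' _ (List.get_mem _ _))
  · intro q σ ss us r t₀ w hr h₀ hs ih₀ ihs hp
    cases hp with
    | node hl h'' => exact ihs (fun u hu' => h'' u hu')
  · intro us i w hi hsem ih hp
    exact ih (hp _ (List.get_mem _ _))
  · intro us d ts ts' hlen h' ih hp
    refine OTOk.out ?_
    intro w hw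
    obtain ⟨i, rfl⟩ := List.mem_iff_get.1 hw
    exact ih (i.cast hlen) hp

@[simp] theorem paramArgs_length (m : ℕ) : (paramArgs (Γ := Γ) (Δ := Δ) (Q := Q) m).length = m := by
  simp [paramArgs]

theorem paramArgs_get (m : ℕ) (i : Fin (paramArgs (Γ := Γ) (Δ := Δ) (Q := Q) m).length) :
    (paramArgs (Γ := Γ) (Δ := Δ) (Q := Q) m).get i = .node (.param i.1) [] := by
  rw [List.get_eq_getElem]; simp [paramArgs]

/-- Lemma B: substituting the identity parameters leaves a tree unchanged. -/
theorem oISub_paramArgs {rsel : Q → Γ → List (RTree Γ) → Set (Rhs Δ Q)} {m : ℕ}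
    {t₀ : OT Δ} (h : OTOk m t₀) :
    OISub rsel (paramArgs (Γ := Γ) (Δ := Δ) (Q := Q) m) t₀ t₀ := by
  induction t₀ using RTree.ind with
  | _ l ts ih =>
    cases h with
    | @param i him =>
        have hlt : i < (paramArgs (Γ := Γ) (Δ := Δ) (Q := Q) m).length := by simpa using him
        have := OISub.param (rsel := rsel) (us := paramArgs m) (i := i)
          (t := RTree.node (OLab.param i) []) hlt ?_
        · exact this
        · rw [paramArgs_get]; exact SemOI.param i
    | out h' =>
        exact OISub.out (hlen := rfl) (fun i => ih _ (List.get_mem _ _) (h' _ (List.get_mem _ _)))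
/-- Restricted OI-substitution: like `OISub`, but each parameter `y_i` is
replaced by a member of the set `βs[i]` (as a plain output tree). -/
inductive OISubR (βs : List (Set (RTree Δ))) : OT Δ → RTree Δ → Prop
  | param {i : ℕ} {β : Set (RTree Δ)} {v : RTree Δ}
      (h : βs[i]? = some β) (hv : v ∈ β) :
      OISubR βs (.node (.param i) []) v
  | out {d : Δ} {ts : List (OT Δ)} {vs : List (RTree Δ)}
      (hlen : vs.length = ts.length)
      (h : ∀ i : Fin ts.length, OISubR βs (ts.get i) (vs.get (i.cast hlen.symm))) :
      OISubR βs (.node (.out d) ts) (.node d vs)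

theorem OISubR.mono {βs βs' : List (Set (RTree Δ))} {t₀ : OT Δ} {v : RTree Δ}
    (h : OISubR βs t₀ v)
    (hm : ∀ (i : ℕ) (β : Set (RTree Δ)), βs[i]? = some β →
      ∃ β', βs'[i]? = some β' ∧ β ⊆ β') :
    OISubR βs' t₀ v := by
  induction h with
  | param h hv =>
      obtain ⟨β', hβ', hsub⟩ := hm _ _ h
      exact OISubR.param hβ' (hsub hv)
  | out hlen h ih => exact OISubR.out hlen ih

theorem oisubR_embed (βs : List (Set (RTree Δ))) (v : RTree Δ) :
    OISubR βs (embed v) v := by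
  induction v using RTree.ind with
  | _ d ts ih =>
    rw [embed_node]
    refine OISubR.out (by simp) ?_
    intro i
    have hi : i.1 < ts.length := by simpa using i.2
    simp only [List.get_eq_getElem, List.getElem_map, Fin.coe_cast]
    exact ih _ (List.getElem_mem hi)

/-- `OISubR` with empty environment forces the tree to be parameter-free. -/
theorem oisubR_nil_eq {t₀ : OT Δ} {v : RTree Δ} (h : OISubR [] t₀ v) :
    t₀ = embed v := by
  induction h with
  | param h hv => simp at h
  | out hlen h ih =>
      rw [embed_node]
      congr 1
      apply List.ext_get (by simpa using hlen.symm)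
      intro n h1 h2
      have := ih ⟨n, h1⟩
      simpa [List.getElem_map] using this

/-- Lemma H: turn a restricted substitution into a real OI-substitution. -/
theorem oisubR_toOISub {rsel : Q → Γ → List (RTree Γ) → Set (Rhs Δ Q)}
    {βs : List (Set (RTree Δ))} {us : List (ST Γ Δ Q)} {t₀ : OT Δ} {v : RTree Δ}
    (h : OISubR βs t₀ v) (hlen : βs.length = us.length)
    (hsem : ∀ (i : ℕ) (β : Set (RTree Δ)), βs[i]? = some β → ∀ w ∈ β,
      ∃ hi : i < us.length, SemOI rsel (us.get ⟨i, hi⟩) (embed w)) :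
    OISub rsel us t₀ (embed v) := by
  induction h with
  | @param i β v h hv =>
      obtain ⟨hi, hs⟩ := hsem i β h v hv
      exact OISub.param hi hs
  | @out d ts vs hl h ih =>
      rw [embed_node]
      refine OISub.out (by simpa using hl) ?_
      intro i
      have : (vs.map embed).get (i.cast (by simpa using hl.symm)) = embed (vs.get (i.cast hl.symm)) := by
        simp [List.getElem_map]
      rw [this]
      exact ih i
theorem ncard_iUnion_le {X : Type} : ∀ {n : ℕ} (f : Fin n → Set X) (g : Fin n → ℕ),
    (∀ i, (f i).ncard ≤ g i) → (⋃ i, f i).ncard ≤ ∑ i, g i := by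
  intro n
  induction n with
  | zero => intro f g h; simp
  | succ n ih =>
      intro f g h
      have : (⋃ i, f i) = f 0 ∪ ⋃ i : Fin n, f i.succ := by
        ext x; constructor
        · rintro ⟨S, ⟨i, rfl⟩, hx⟩
          rcases Fin.eq_zero_or_eq_succ i with rfl | ⟨j, rfl⟩
          · exact Or.inl hx
          · exact Or.inr ⟨_, ⟨j, rfl⟩, hx⟩
        · rintro (hx | ⟨S, ⟨j, rfl⟩, hx⟩)
          · exact ⟨_, ⟨0, rfl⟩, hx⟩
          · exact ⟨_, ⟨j.succ, rfl⟩, hx⟩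
      rw [this, Fin.sum_univ_succ]
      calc (f 0 ∪ ⋃ i : Fin n, f i.succ).ncard
          ≤ (f 0).ncard + (⋃ i : Fin n, f i.succ).ncard := Set.ncard_union_le _ _
        _ ≤ g 0 + ∑ i : Fin n, g i.succ := by
            exact Nat.add_le_add (h 0) (ih _ _ (fun i => h i.succ))

theorem list_sum_map_eq {X : Type} (ts : List X) (f : X → ℕ) :
    (ts.map f).sum = ∑ i : Fin ts.length, f (ts.get i) := by
  conv_lhs => rw [← List.ofFn_get ts]
  rw [List.map_ofFn, List.sum_ofFn]
  simp

/-- Lemma F: composing a restricted substitution through argument evaluation. -/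
theorem oisubR_compose {rsel : Q → Γ → List (RTree Γ) → Set (Rhs Δ Q)}
    {γs βs : List (Set (RTree Δ))} {args : List (ST Γ Δ Q)}
    (hτ : ∀ (j : ℕ) (γ : Set (RTree Δ)) (u : RTree Δ), γs[j]? = some γ → u ∈ γ →
       ∃ (hj : j < args.length) (τ : OT Δ),
         SemOI rsel (args.get ⟨j, hj⟩) τ ∧ OISubR βs τ u)
    {t₁ : OT Δ} {v : RTree Δ} (h : OISubR γs t₁ v) :
    ∃ t₀, OISub rsel args t₁ t₀ ∧ OISubR βs t₀ v := by
  induction h with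
  | @param j γ v hγ hv =>
      obtain ⟨hj, τ, hsem, hR⟩ := hτ j γ v hγ hv
      exact ⟨τ, OISub.param hj hsem, hR⟩
  | @out d ts vs hl h ih =>
      choose t₀s hsub hR using ih
      refine ⟨.node (.out d) (List.ofFn t₀s), OISub.out (by simp) ?_, OISubR.out (by simp [hl]) ?_⟩
      · intro i
        have : (List.ofFn t₀s).get (i.cast (by simp)) = t₀s i := by
          simp [List.get_ofFn]
        rw [this]; exact hsub i
      · intro i
        have hi : (i : ℕ) < ts.length := by simpa using i.2
        have h1 : (List.ofFn t₀s).get i = t₀s ⟨i, hi⟩ := by simp [List.get_ofFn]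
        have h2 : vs.get (i.cast (by simp [hl])) = vs.get ((⟨i, hi⟩ : Fin ts.length).cast hl.symm) := rfl
        rw [h1, h2]; exact hR ⟨i, hi⟩

/-- Lemma G: decomposing a substitution followed by a restricted substitution. -/
theorem oisub_decompose {rsel : Q → Γ → List (RTree Γ) → Set (Rhs Δ Q)}
    {βs : List (Set (RTree Δ))} {args : List (ST Γ Δ Q)} {t₁ t₀ : OT Δ}
    (h : OISub rsel args t₁ t₀) :
    ∀ v : RTree Δ, OISubR βs t₀ v →
    ∃ γs : List (Set (RTree Δ)), γs.length = args.length ∧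
      (∀ (j : ℕ) (γ : Set (RTree Δ)), γs[j]? = some γ → γ.Finite ∧
        γ.ncard ≤ countParam j t₁ ∧
        ∀ u ∈ γ, RTree.Subtree u v ∧
          ∃ (hj : j < args.length) (τ : OT Δ),
            SemOI rsel (args.get ⟨j, hj⟩) τ ∧ OISubR βs τ u) ∧
      OISubR γs t₁ v := by
  refine OISub.rec (rsel := rsel)
    (motive_1 := fun _ _ _ => True)
    (motive_2 := fun us t₁ t₀ _ => ∀ v : RTree Δ, OISubR βs t₀ v →
      ∃ γs : List (Set (RTree Δ)), γs.length = us.length ∧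
      (∀ (j : ℕ) (γ : Set (RTree Δ)), γs[j]? = some γ → γ.Finite ∧
        γ.ncard ≤ countParam j t₁ ∧
        ∀ u ∈ γ, RTree.Subtree u v ∧
          ∃ (hj : j < us.length) (τ : OT Δ),
            SemOI rsel (us.get ⟨j, hj⟩) τ ∧ OISubR βs τ u) ∧
      OISubR γs t₁ v)
    ?_ ?_ ?_ ?_ ?_ h
  · intro _; trivial
  · intros; trivial
  · intros; trivial
  · -- param case
    intro us i t hi hsem _ v hR
    refine ⟨(List.range us.length).map (fun j => if j = i then {v} else ∅), by simp, ?_, ?_⟩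
    · intro j γ hγ
      rw [List.getElem?_map] at hγ
      have hjlt : j < us.length := by
        by_contra hc
        rw [List.getElem?_eq_none (by simpa using hc)] at hγ; simp at hγ
      rw [List.getElem?_eq_getElem (by simpa using hjlt)] at hγ
      simp only [List.getElem_range, Option.map_some, Option.some.injEq] at hγ
      subst hγ
      by_cases hji : j = i
      · subst hji
        rw [if_pos rfl]
        refine ⟨Set.finite_singleton v, by simp, ?_⟩
        rintro u rfl
        exact ⟨RTree.Subtree.refl _, hi, t, hsem, hR⟩
      · rw [if_neg hji]
        exact ⟨Set.finite_empty, by simp, by simp⟩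
    · refine OISubR.param (i := i) (β := {v}) ?_ rfl
      rw [List.getElem?_map, List.getElem?_eq_getElem (by simpa using hi)]
      simp
  · -- out case
    intro us d ts ts' hlen h ih v hR
    cases hR with
    | @out _ _ vs hlv hv =>
      choose γfun hγlen hγspec hγR using fun i : Fin ts.length =>
        ih i (vs.get ((i.cast hlen.symm).cast hlv.symm)) (hv (i.cast hlen.symm))
      refine ⟨(List.range us.length).map
          (fun j => ⋃ i : Fin ts.length, (γfun i).getD j ∅), by simp, ?_, ?_⟩
      · intro j γ hγ
        rw [List.getElem?_map] at hγ
        have hjlt : j < us.length := by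
          by_contra hc
          rw [List.getElem?_eq_none (by simpa using hc)] at hγ; simp at hγ
        rw [List.getElem?_eq_getElem (by simpa using hjlt)] at hγ
        simp only [List.getElem_range, Option.map_some, Option.some.injEq] at hγ
        subst hγ
        have hji : ∀ i : Fin ts.length, j < (γfun i).length := fun i => by
          rw [hγlen i]; exact hjlt
        have hgetD : ∀ i : Fin ts.length, (γfun i).getD j ∅ = (γfun i)[j]'(hji i) :=
          fun i => List.getD_eq_getElem _ _ (hji i)
        have hsome : ∀ i : Fin ts.length, (γfun i)[j]? = some ((γfun i)[j]'(hji i)) :=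
          fun i => List.getElem?_eq_getElem (hji i)
        have spec := fun i : Fin ts.length => hγspec i j _ (hsome i)
        refine ⟨?_, ?_, ?_⟩
        · refine Set.finite_iUnion (fun i => ?_)
          rw [hgetD i]; exact (spec i).1
        · calc (⋃ i : Fin ts.length, (γfun i).getD j ∅).ncard
              ≤ ∑ i : Fin ts.length, countParam j (ts.get i) := by
                refine ncard_iUnion_le _ _ (fun i => ?_)
                rw [hgetD i]; exact (spec i).2.1
            _ = countParam j (RTree.node (OLab.out d) ts) := by
                rw [countParam_out, list_sum_map_eq]
        · intro u hu
          rw [Set.mem_iUnion] at hu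
          obtain ⟨i, hu⟩ := hu
          rw [hgetD i] at hu
          obtain ⟨hsub, hτ⟩ := (spec i).2.2 u hu
          exact ⟨hsub.trans (RTree.subtree_of_mem (List.get_mem _ _)), hτ⟩
      · refine OISubR.out (hlen := hlv.trans hlen) (fun i => ?_)
        refine (hγR i).mono ?_
        intro j β hβ
        have hjlt : j < us.length := by
          have : j < (γfun i).length := by
            by_contra hc
            rw [List.getElem?_eq_none (by omega)] at hβ; simp at hβ
          rw [hγlen i] at this; exact this
        refine ⟨⋃ i' : Fin ts.length, (γfun i').getD j ∅, ?_, ?_⟩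
        · rw [List.getElem?_map, List.getElem?_eq_getElem (by simpa using hjlt)]
          simp
        · have hji : j < (γfun i).length := by rw [hγlen i]; exact hjlt
          have hβ' : β = (γfun i).getD j ∅ := by
            rw [List.getD_eq_getElem _ _ hji]
            rw [List.getElem?_eq_getElem hji] at hβ
            exact (Option.some_inj.mp hβ).symm
          rw [hβ']
          exact Set.subset_iUnion (fun i' : Fin ts.length => (γfun i').getD j ∅) i
theorem runOI_node (rankQ : Q → ℕ) (rsel : Q → Γ → List (RTree Γ) → Set (Rhs Δ Q))
    (t : RTree Δ) (c : ℕ) (σ : Γ) (ss : List (RTree Γ)) :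
    runOI rankQ rsel t c (RTree.node σ ss) =
      {trip | trip.2.1.length = rankQ trip.1 ∧
        (∀ β ∈ trip.2.1, SmallSet t c β) ∧ RTree.Subtree trip.2.2 t ∧
        ∃ r ∈ rsel trip.1 σ ss,
          FPredOI t trip.2.1 (ss.map (runOI rankQ rsel t c)) r trip.2.2} := by
  rw [runOI, List.attach_map_val]

/-- The statement of the inner correctness claim for a single input tree. -/
def ClaimAt (M : MTT Γ Δ Q) (c : ℕ) (t : RTree Δ) (s : RTree Γ) : Prop :=
  ∀ (q : Q) (βs : List (Set (RTree Δ))) (v : RTree Δ),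
    βs.length = M.rankQ q → (∀ β ∈ βs, SmallSet t c β) → RTree.Subtree v t →
    ((∃ r ∈ M.rules q s.label, ∃ t₀, SemOI M.sel (substX s.children r) t₀ ∧ OISubR βs t₀ v)
      ↔ (q, βs, v) ∈ runOI M.rankQ M.sel t c s)

theorem crux_bwd (M : MTT Γ Δ Q) (c : ℕ) (t : RTree Δ) (ss : List (RTree Γ))
    (hclaim : ∀ s ∈ ss, ClaimAt M c t s)
    {βs : List (Set (RTree Δ))} {r : Rhs Δ Q} {v : RTree Δ}
    (hF : FPredOI t βs (ss.map (runOI M.rankQ M.sel t c)) r v) :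
    ∃ t₀, SemOI M.sel (substX ss r) t₀ ∧ OISubR βs t₀ v := by
  induction hF with
  | @param i v' β h hv =>
      exact ⟨.node (.param i) [], by rw [substX_param]; exact SemOI.param i,
        OISubR.param h hv⟩
  | @out d rs ws hlen h ih =>
      choose t₀s hsem hsubR using ih
      refine ⟨.node (.out d) (List.ofFn t₀s), ?_, ?_⟩
      · rw [substX_out]
        refine SemOI.out (by simp) ?_
        intro i
        have hi : (i : ℕ) < rs.length := by simpa using i.2
        simp only [List.get_eq_getElem, List.getElem_map, List.getElem_ofFn]
        exact hsem ⟨i, hi⟩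
      · refine OISubR.out (by simpa using hlen) ?_
        intro i
        have hi : (i : ℕ) < rs.length := by simpa using i.2
        simp only [List.get_eq_getElem, List.getElem_ofFn]
        exact hsubR ⟨i, hi⟩
  | @call q' x rs v' γs hlenγ ha h ih =>
      have hx : x < ss.length := by
        by_contra hc
        rw [List.getD_eq_default] at ha
        · exact absurd ha (Set.notMem_empty _)
        · simpa using (by omega : ss.length ≤ x)
      set s_x := ss[x]'hx with hsx
      have ha' : (q', γs, v') ∈ runOI M.rankQ M.sel t c s_x := by
        rwa [List.getD_eq_getElem _ _ (by simpa using hx), List.getElem_map] at ha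
      have hmem : (q', γs, v') ∈ {trip : TripOI Δ Q | trip.2.1.length = M.rankQ trip.1 ∧
          (∀ β ∈ trip.2.1, SmallSet t c β) ∧ RTree.Subtree trip.2.2 t ∧
          ∃ r' ∈ M.sel trip.1 s_x.label s_x.children,
            FPredOI t trip.2.1 (s_x.children.map (runOI M.rankQ M.sel t c)) r' trip.2.2} := by
        rw [← runOI_node]
        rw [RTree.node_label_children]
        exact ha'
      obtain ⟨hγlen, hγsmall, hvt, _⟩ := hmem
      have hsxmem : s_x ∈ ss := List.getElem_mem hx
      obtain ⟨r', hr', t₁, hsem₁, hsubR₁⟩ :=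
        (hclaim s_x hsxmem q' γs v' hγlen hγsmall hvt).mpr ha'
      have hτ : ∀ (j : ℕ) (γ : Set (RTree Δ)) (u : RTree Δ), γs[j]? = some γ → u ∈ γ →
          ∃ (hj : j < (rs.map (substX ss)).length) (τ : OT Δ),
            SemOI M.sel ((rs.map (substX ss)).get ⟨j, hj⟩) τ ∧ OISubR βs τ u := by
        intro j γ u hγ hu
        have hjγ : j < γs.length := by
          by_contra hc
          rw [List.getElem?_eq_none (by omega)] at hγ; simp at hγ
        have hj : j < rs.length := by omega
        have hγeq : γs.get ((⟨j, hj⟩ : Fin rs.length).cast hlenγ.symm) = γ := by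
          rw [List.getElem?_eq_getElem hjγ] at hγ
          simpa using Option.some_inj.mp hγ
        obtain ⟨τ, hsemτ, hsubRτ⟩ := ih ⟨j, hj⟩ u (by rw [hγeq]; exact hu)
        refine ⟨by simpa using hj, τ, ?_, hsubRτ⟩
        simpa only [List.get_eq_getElem, List.getElem_map] using hsemτ
      obtain ⟨t₀, hsub, hsubR⟩ := oisubR_compose (args := rs.map (substX ss))
        (βs := βs) (γs := γs) hτ hsubR₁
      refine ⟨t₀, ?_, hsubR⟩
      rw [substX_call _ _ _ _ (List.getElem?_eq_getElem hx)]
      have := SemOI.call (rsel := M.sel) (q := q') (σ := s_x.label) (ss := s_x.children)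
        (us := rs.map (substX ss)) hr' hsem₁ hsub
      rwa [RTree.node_label_children] at this
theorem crux_fwd (M : MTT Γ Δ Q) (c : ℕ) (hfc : FinCopyP M c) (t : RTree Δ)
    (ss : List (RTree Γ)) (hsswf : ∀ s ∈ ss, s.Wf M.rankΓ)
    (hclaim : ∀ s ∈ ss, ClaimAt M c t s) :
    ∀ (r : Rhs Δ Q) {m : ℕ} {βs : List (Set (RTree Δ))} {t₀ : OT Δ} {v : RTree Δ},
      RhsWf M.rankΔ M.rankQ ss.length m r →
      SemOI M.sel (substX ss r) t₀ → OISubR βs t₀ v → RTree.Subtree v t →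
      FPredOI t βs (ss.map (runOI M.rankQ M.sel t c)) r v := by
  intro r
  induction r using RTree.ind with
  | _ l rs ihr =>
    intro m βs t₀ v hrwf hsem hsubR hvt
    cases l with
    | param i =>
        have hrs : rs = [] := by cases hrwf; rfl
        subst hrs
        rw [substX_param] at hsem
        cases hsem
        cases hsubR with
        | param h hv => exact FPredOI.param h hv
    | out d =>
        rw [substX_out] at hsem
        cases hsem with
        | @out _ _ ts hlen0 h0 =>
          cases hsubR with
          | @out _ _ vs hlenv hv =>
            have hwf' : ∀ u ∈ rs, RhsWf M.rankΔ M.rankQ ss.length m u := by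
              cases hrwf with | out hlen h => exact h
            have hlents : ts.length = rs.length := by simpa using hlen0
            refine FPredOI.out (hlen := by omega) ?_
            intro i
            have hi : (i : ℕ) < rs.length := i.2
            have hits : (i : ℕ) < ts.length := by omega
            have hivs : (i : ℕ) < vs.length := by omega
            have hsem_i := h0 (i.cast (by simp))
            have hv_i := hv ⟨i, hits⟩
            simp only [List.get_eq_getElem, List.getElem_map, Fin.coe_cast] at hsem_i hv_i ⊢
            refine ihr _ (List.getElem_mem hi) (hwf' _ (List.getElem_mem hi)) hsem_i hv_i ?_
            exact (RTree.subtree_of_mem (List.getElem_mem hivs)).trans hvt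
    | call q' x =>
        obtain ⟨hx, hlenrs, hwf'⟩ : x < ss.length ∧ rs.length = M.rankQ q' ∧
            ∀ u ∈ rs, RhsWf M.rankΔ M.rankQ ss.length m u := by
          cases hrwf with | call hx hlen h => exact ⟨hx, hlen, h⟩
        obtain ⟨σ', ss₂, hsx⟩ : ∃ a b, ss[x]'hx = RTree.node a b :=
          ⟨_, _, (RTree.node_label_children _).symm⟩
        rw [substX_call _ _ _ _ (List.getElem?_eq_getElem hx), hsx] at hsem
        cases hsem with
        | @call _ _ _ _ r' t₁ _ hr' hsem₁ hsub =>
          obtain ⟨γs, hγlen, hγspec, hγR⟩ := oisub_decompose hsub v hsubR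
          have hγlen' : γs.length = rs.length := by simpa using hγlen
          have hsxwf : (RTree.node σ' ss₂).Wf M.rankΓ := by
            rw [← hsx]; exact hsswf _ (List.getElem_mem hx)
          have hlen2 : ss₂.length = M.rankΓ σ' := by
            cases hsxwf with | node hl _ => exact hl
          have hok : OTOk (M.rankQ q') t₁ :=
            semOI_paramLt hsem₁ (substX_paramLt (M.rules_wf q' σ' r' hr') ss₂ (by omega))
          have hcount : ∀ j, j < M.rankQ q' → countParam j t₁ ≤ c := by
            intro j hj
            refine hfc q' (RTree.node σ' ss₂) hsxwf t₁ ?_ j hj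
            exact SemOI.call hr' hsem₁ (oISub_paramArgs hok)
          have hγsmall : ∀ β ∈ γs, SmallSet t c β := by
            intro β hβ
            obtain ⟨j, hjlt, hjget⟩ := List.mem_iff_getElem.mp hβ
            have hspec := hγspec j β (by rw [List.getElem?_eq_getElem hjlt, hjget])
            refine ⟨fun w hw => ((hspec.2.2 w hw).1).trans hvt, ?_⟩
            exact hspec.2.1.trans (hcount j (by omega))
          have hrun : (q', γs, v) ∈ runOI M.rankQ M.sel t c (RTree.node σ' ss₂) := by
            have hc := hclaim (ss[x]'hx) (List.getElem_mem hx)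
            rw [hsx] at hc
            refine (hc q' γs v (by omega) hγsmall hvt).mp ?_
            exact ⟨r', by simpa using hr', t₁, by simpa using hsem₁, hγR⟩
          refine FPredOI.call (γs := γs) (hlen := hγlen') ?_ ?_
          · rw [List.getD_eq_getElem _ _ (by simpa using hx), List.getElem_map, hsx]
            exact hrun
          · intro i u hu
            have hiγ : (i : ℕ) < γs.length := by omega
            have hspec := hγspec i (γs[(i : ℕ)]'hiγ) (List.getElem?_eq_getElem hiγ)
            have hu' : u ∈ γs[(i : ℕ)]'hiγ := by
              simpa only [List.get_eq_getElem, Fin.coe_cast] using hu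
            obtain ⟨hsubuv, hj, τ, hsemτ, hsubRτ⟩ := hspec.2.2 u hu'
            have hsemτ' : SemOI M.sel (substX ss (rs.get i)) τ := by
              simpa only [List.get_eq_getElem, List.getElem_map] using hsemτ
            exact ihr _ (List.get_mem _ _) (hwf' _ (List.get_mem _ _)) hsemτ' hsubRτ
              (hsubuv.trans hvt)
theorem claim_dagger (M : MTT Γ Δ Q) (c : ℕ) (hfc : FinCopyP M c) (t : RTree Δ) :
    ∀ s : RTree Γ, s.Wf M.rankΓ → ClaimAt M c t s := by
  intro s
  induction s using RTree.ind with
  | _ σ ss hIH =>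
    intro hwf q βs v hβlen hβsmall hvt
    have hsswf : ∀ s ∈ ss, s.Wf M.rankΓ := by cases hwf with | node _ h => exact h
    have hk : ss.length = M.rankΓ σ := by cases hwf with | node hl _ => exact hl
    have hclaim : ∀ s ∈ ss, ClaimAt M c t s := fun s hs => hIH s hs (hsswf s hs)
    simp only [RTree.label_node, RTree.children_node]
    rw [runOI_node]
    simp only [Set.mem_setOf_eq, sel_eq]
    constructor
    · rintro ⟨r, hr, t₀, hsem, hsubR⟩
      exact ⟨hβlen, hβsmall, hvt, r, hr, crux_fwd M c hfc t ss hsswf hclaim r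
        (by rw [hk]; exact M.rules_wf q σ r hr) hsem hsubR hvt⟩
    · rintro ⟨-, -, -, r, hr, hF⟩
      exact ⟨r, hr, crux_bwd M c t ss hclaim hF⟩
/-- the correctness claim for the inverse-type construction for
parameter-finite-copying OI-mtts.  For every input tree `s'`, state `q` of rank
`n`, parameter-free trees `u_1,…,u_n` over `Δ ∪ (Q × T_Σ)`, and every subtree
`t'` of `t`: `t' ∈ ⟦⟨q,s'⟩(u_1,…,u_n)⟧_OI` iff there exist sets `B_1,…,B_n` of
subtrees of `t` with `|B_i| ≤ c` and `B_i ⊆ ⟦u_i⟧_OI` for all `i`, such that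
`(q,(B_1,…,B_n),t') ∈ run_OI(s')`. -/
theorem runOI_claim {Γ Δ Q : Type} [Fintype Γ] [Fintype Δ] [Fintype Q]
    (M : MTT Γ Δ Q) (c : ℕ) (hfc : FinCopyP M c)
    (t : RTree Δ) (ht : t.Wf M.rankΔ)
    (s' : RTree Γ) (hs : s'.Wf M.rankΓ)
    (q : Q) (us : List (ST Γ Δ Q)) (hlen : us.length = M.rankQ q)
    (hus : ∀ u ∈ us, STWf M.rankΓ M.rankΔ M.rankQ u ∧ NoParam u)
    (t' : RTree Δ) (ht' : RTree.Subtree t' t) :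
    SemOI M.sel (.node (.call q s') us) (embed t') ↔
      ∃ βs : List (Set (RTree Δ)),
        List.Forall₂ (fun u β => (∀ w ∈ β, RTree.Subtree w t) ∧ β.ncard ≤ c ∧
            ∀ w ∈ β, SemOI M.sel u (embed w)) us βs ∧
        (q, βs, t') ∈ runOI M.rankQ M.sel t c s' := by
  have hdag := claim_dagger M c hfc t s' hs
  constructor
  · intro hsem
    cases hsem with
    | @call _ σ ss _ r t₀ _ hr hsem₀ hsub =>
      -- decompose the outer substitution
      obtain ⟨βs, hβlen, hβspec, hβR⟩ :=
        oisub_decompose (βs := ([] : List (Set (RTree Δ)))) hsub t' (oisubR_embed _ t')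
      have hswf : (RTree.node σ ss).Wf M.rankΓ := hs
      have hk : ss.length = M.rankΓ σ := by cases hswf with | node hl _ => exact hl
      have hok : OTOk (M.rankQ q) t₀ :=
        semOI_paramLt hsem₀ (substX_paramLt (M.rules_wf q σ r hr) ss (by omega))
      have hcount : ∀ j, j < M.rankQ q → countParam j t₀ ≤ c := fun j hj =>
        hfc q (RTree.node σ ss) hswf t₀ (SemOI.call hr hsem₀ (oISub_paramArgs hok)) j hj
      have hspec' : ∀ (j : ℕ) (hj : j < βs.length),
          (∀ w ∈ βs[j]'hj, RTree.Subtree w t) ∧ (βs[j]'hj).ncard ≤ c ∧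
          ∀ w ∈ βs[j]'hj, SemOI M.sel (us[j]'(by omega)) (embed w) := by
        intro j hj
        have hspec := hβspec j (βs[j]'hj) (List.getElem?_eq_getElem hj)
        refine ⟨fun w hw => ((hspec.2.2 w hw).1).trans ht', ?_, ?_⟩
        · exact hspec.2.1.trans (hcount j (by omega))
        · intro w hw
          obtain ⟨-, hjus, τ, hsemτ, hτnil⟩ := hspec.2.2 w hw
          have := oisubR_nil_eq hτnil
          subst this
          simpa using hsemτ
      refine ⟨βs, ?_, ?_⟩
      · rw [List.forall₂_iff_get]
        refine ⟨by omega, fun i h₁ h₂ => ?_⟩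
        have := hspec' i h₂
        simpa using this
      · refine (hdag q βs t' (by omega) ?_ ht').mp ?_
        · intro β hβ
          obtain ⟨j, hjlt, rfl⟩ := List.mem_iff_getElem.mp hβ
          exact ⟨(hspec' j hjlt).1, (hspec' j hjlt).2.1⟩
        · exact ⟨r, by simpa using hr, t₀, by simpa using hsem₀, hβR⟩
  · rintro ⟨βs, hF₂, hrun⟩
    have hlenβ : us.length = βs.length := List.Forall₂.length_eq hF₂
    rw [List.forall₂_iff_get] at hF₂
    obtain ⟨-, hF₂⟩ := hF₂
    have hsmall : ∀ β ∈ βs, SmallSet t c β := by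
      intro β hβ
      obtain ⟨j, hjlt, rfl⟩ := List.mem_iff_getElem.mp hβ
      obtain ⟨h1, h2, h3⟩ := hF₂ j (by omega) hjlt
      exact ⟨h1, h2⟩
    obtain ⟨r, hr, t₀, hsem₀, hsubR⟩ := (hdag q βs t' (by omega) hsmall ht').mpr hrun
    have hsub : OISub M.sel us t₀ (embed t') := by
      refine oisubR_toOISub hsubR (by omega) ?_
      intro i β hβ w hw
      have hiβ : i < βs.length := by
        by_contra hc
        rw [List.getElem?_eq_none (by omega)] at hβ; simp at hβ
      have hβ' : β = βs[i]'hiβ := by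
        rw [List.getElem?_eq_getElem hiβ] at hβ
        exact (Option.some_inj.mp hβ).symm
      refine ⟨by omega, ?_⟩
      have := (hF₂ i (by omega) hiβ).2.2 w (by simp only [List.get_eq_getElem]; rw [← hβ']; exact hw)
      simpa using this
    have := SemOI.call (q := q) (σ := s'.label) (ss := s'.children)
      (us := us) (by simpa using hr) (by simpa using hsem₀) hsub
    rwa [RTree.node_label_children] at this

end MttF
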